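/- Let X = (X_{G₁}, ..., X_{G_M}) be a random vector partitioned into M groups, and construct X̃ sequentially: for m = 1, ..., M, sample X̃_{G_m} from the conditional law L(X_{G_m} | X_{−G_m}, X̃_{G₁}, ..., X̃_{G_{m−1}}). Then for any S ⊆ [M], (X, X̃)_{GSwap(S)} has the same distribution as (X, X̃), where GSwap(S) exchanges X_{G_m} and X̃_{G_m} for each m ∈ S. -/

import Mathlib

open Finset
open scoped Classical BigOperators

section KnockoffAux

variable {M : ℕ} {α : Fin M → Type*} [∀ m, Fintype (α m)] [∀ m, DecidableEq (α m)]

/-- Joint mass of `X = x` together with `X̃ i = xt i` for all `i < k`. -/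
noncomputable def knockJ (Q : (∀ m, α m) → (∀ m, α m) → ℝ) (k : ℕ)
    (x xt : ∀ i, α i) : ℝ :=
  ∑ u : ∀ i, α i, ∑ y : ∀ i, α i,
    if u = x ∧ (∀ i : Fin M, (i : ℕ) < k → y i = xt i) then Q u y else 0

lemma knockJ_top (Q : (∀ m, α m) → (∀ m, α m) → ℝ) (x xt : ∀ i, α i) :
    knockJ Q M x xt = Q x xt := by
  unfold knockJ
  have h : ∀ u y : ∀ i, α i,
      (u = x ∧ (∀ i : Fin M, (i : ℕ) < M → y i = xt i)) ↔ (u = x ∧ y = xt) := by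
    intro u y
    constructor
    · rintro ⟨h1, h2⟩; exact ⟨h1, funext fun i => h2 i i.isLt⟩
    · rintro ⟨h1, rfl⟩; exact ⟨h1, fun i _ => rfl⟩
  calc (∑ u : ∀ i, α i, ∑ y : ∀ i, α i,
        if u = x ∧ (∀ i : Fin M, (i : ℕ) < M → y i = xt i) then Q u y else 0)
      = ∑ u : ∀ i, α i, ∑ y : ∀ i, α i, if u = x ∧ y = xt then Q u y else 0 := by
        refine Finset.sum_congr rfl fun u _ => Finset.sum_congr rfl fun y _ => ?_
        exact if_congr (h u y) rfl rfl
    _ = Q x xt := by simp [ite_and, Finset.sum_ite_eq']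

lemma knockJ_nonneg (Q : (∀ m, α m) → (∀ m, α m) → ℝ) (hQ0 : ∀ x y, 0 ≤ Q x y)
    (k : ℕ) (x xt : ∀ i, α i) : 0 ≤ knockJ Q k x xt := by
  unfold knockJ
  refine Finset.sum_nonneg fun u _ => Finset.sum_nonneg fun y _ => ?_
  split_ifs
  · exact hQ0 u y
  · exact le_rfl

lemma knockJ_congr (Q : (∀ m, α m) → (∀ m, α m) → ℝ) (k : ℕ)
    (x xt xt' : ∀ i, α i) (h : ∀ i : Fin M, (i : ℕ) < k → xt i = xt' i) :
    knockJ Q k x xt = knockJ Q k x xt' := by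
  unfold knockJ
  refine Finset.sum_congr rfl fun u _ => Finset.sum_congr rfl fun y _ => ?_
  refine if_congr (and_congr_right fun _ => ?_) rfl rfl
  constructor
  · intro hy i hi; rw [hy i hi, h i hi]
  · intro hy i hi; rw [hy i hi, h i hi]

lemma knockJ_mono (Q : (∀ m, α m) → (∀ m, α m) → ℝ) (hQ0 : ∀ x y, 0 ≤ Q x y)
    (k : ℕ) (x xt : ∀ i, α i) :
    knockJ Q (k + 1) x xt ≤ knockJ Q k x xt := by
  unfold knockJ
  refine Finset.sum_le_sum fun u _ => Finset.sum_le_sum fun y _ => ?_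
  by_cases h : u = x ∧ (∀ i : Fin M, (i : ℕ) < k + 1 → y i = xt i)
  · rw [if_pos h, if_pos ⟨h.1, fun i hi => h.2 i (by omega)⟩]
  · rw [if_neg h]
    split_ifs with h2
    · exact hQ0 u y
    · exact le_rfl

lemma sum1_eq (Q : (∀ m, α m) → (∀ m, α m) → ℝ) (m : Fin M)
    (x xt : ∀ i, α i) (a b : α m) :
    (∑ u : ∀ i, α i, ∑ y : ∀ i, α i,
        if (∀ i, i ≠ m → u i = x i) ∧ u m = a ∧
            (∀ i, i < m → y i = xt i) ∧ y m = b
          then Q u y else 0)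
    = knockJ Q ((m : ℕ) + 1) (Function.update x m a) (Function.update xt m b) := by
  unfold knockJ
  refine Finset.sum_congr rfl fun u _ => Finset.sum_congr rfl fun y _ => ?_
  refine if_congr ?_ rfl rfl
  constructor
  · rintro ⟨h1, h2, h3, h4⟩
    refine ⟨funext fun i => ?_, fun i hi => ?_⟩
    · rcases eq_or_ne i m with rfl | h
      · simp [h2]
      · simp [Function.update_apply, h, h1 i h]
    · rcases eq_or_ne i m with rfl | h
      · simpa using h4
      · have hv : (i : ℕ) ≠ (m : ℕ) := fun hh => h (Fin.ext hh)
        have hlt : i < m := Fin.lt_def.mpr (by omega)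
        simp [Function.update_apply, h, h3 i hlt]
  · rintro ⟨rfl, h2⟩
    refine ⟨fun i hi => Function.update_of_ne hi a x, Function.update_self m a x,
      fun i hi => ?_, ?_⟩
    · have hlt : (i : ℕ) < (m : ℕ) := Fin.lt_def.mp hi
      rw [h2 i (by omega), Function.update_of_ne (ne_of_lt hi)]
    · rw [h2 m (by omega), Function.update_self]

lemma sum3_eq (Q : (∀ m, α m) → (∀ m, α m) → ℝ) (m : Fin M)
    (x xt : ∀ i, α i) (a : α m) :
    (∑ u : ∀ i, α i, ∑ y : ∀ i, α i,
        if (∀ i, i ≠ m → u i = x i) ∧ u m = a ∧ (∀ i, i < m → y i = xt i)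
          then Q u y else 0)
    = knockJ Q (m : ℕ) (Function.update x m a) xt := by
  unfold knockJ
  refine Finset.sum_congr rfl fun u _ => Finset.sum_congr rfl fun y _ => ?_
  refine if_congr ?_ rfl rfl
  constructor
  · rintro ⟨h1, h2, h3⟩
    refine ⟨funext fun i => ?_, fun i hi => ?_⟩
    · rcases eq_or_ne i m with rfl | h
      · simp [h2]
      · simp [Function.update_apply, h, h1 i h]
    · have hv : (i : ℕ) ≠ (m : ℕ) := by omega
      exact h3 i (Fin.lt_def.mpr (by omega))
  · rintro ⟨rfl, h2⟩
    refine ⟨fun i hi => Function.update_of_ne hi a x, Function.update_self m a x,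
      fun i hi => h2 i (Fin.lt_def.mp hi)⟩

lemma sum2_eq (Q : (∀ m, α m) → (∀ m, α m) → ℝ) (m : Fin M)
    (x xt : ∀ i, α i) :
    (∑ u : ∀ i, α i, ∑ y : ∀ i, α i,
        if (∀ i, i ≠ m → u i = x i) ∧ (∀ i, i < m → y i = xt i)
          then Q u y else 0)
    = ∑ c : α m, knockJ Q (m : ℕ) (Function.update x m c) xt := by
  have step1 : (∑ u : ∀ i, α i, ∑ y : ∀ i, α i,
        if (∀ i, i ≠ m → u i = x i) ∧ (∀ i, i < m → y i = xt i)
          then Q u y else 0)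
      = ∑ u : ∀ i, α i, ∑ y : ∀ i, α i, ∑ c : α m,
        if (∀ i, i ≠ m → u i = x i) ∧ u m = c ∧ (∀ i, i < m → y i = xt i)
          then Q u y else 0 := by
    refine Finset.sum_congr rfl fun u _ => Finset.sum_congr rfl fun y _ => ?_
    by_cases h : (∀ i, i ≠ m → u i = x i) ∧ (∀ i, i < m → y i = xt i)
    · rw [if_pos h]
      have : ∀ c : α m,
          (if (∀ i, i ≠ m → u i = x i) ∧ u m = c ∧ (∀ i, i < m → y i = xt i)
            then Q u y else 0)
          = if u m = c then Q u y else 0 := by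
        intro c
        refine if_congr ?_ rfl rfl
        constructor
        · rintro ⟨_, h2, _⟩; exact h2
        · intro h2; exact ⟨h.1, h2, h.2⟩
      rw [Finset.sum_congr rfl fun c _ => this c]
      simp [Finset.sum_ite_eq]
    · rw [if_neg h]
      refine (Finset.sum_eq_zero fun c _ => ?_).symm
      rw [if_neg]
      intro hc
      exact h ⟨hc.1, hc.2.2⟩
  rw [step1]
  calc (∑ u : ∀ i, α i, ∑ y : ∀ i, α i, ∑ c : α m,
        if (∀ i, i ≠ m → u i = x i) ∧ u m = c ∧ (∀ i, i < m → y i = xt i)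
          then Q u y else 0)
      = ∑ u : ∀ i, α i, ∑ c : α m, ∑ y : ∀ i, α i,
          if (∀ i, i ≠ m → u i = x i) ∧ u m = c ∧ (∀ i, i < m → y i = xt i)
            then Q u y else 0 :=
        Finset.sum_congr rfl fun u _ => Finset.sum_comm
    _ = ∑ c : α m, ∑ u : ∀ i, α i, ∑ y : ∀ i, α i,
          if (∀ i, i ≠ m → u i = x i) ∧ u m = c ∧ (∀ i, i < m → y i = xt i)
            then Q u y else 0 := Finset.sum_comm
    _ = ∑ c : α m, knockJ Q (m : ℕ) (Function.update x m c) xt :=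
        Finset.sum_congr rfl fun c _ => sum3_eq Q m x xt c

end KnockoffAux

/-- Group Model-X knockoff exchangeability for the sequential construction (finite
probability space formulation). Let `Q` be the joint mass function of `(X, X̃)`, where
`X̃` is constructed sequentially: for each group `m`, given the context
`(X_{−G_m}, X̃_{G_1},…,X̃_{G_{m−1}})`, the pair `(X_{G_m}, X̃_{G_m})` is conditionally
independent with `X̃_{G_m}` distributed as the conditional law of `X_{G_m}` given the
context (hypothesis `hseq`, in cross-multiplied mass-function form). Then for every
`S ⊆ [M]`, `(X, X̃)_{GSwap(S)}` has the same distribution as `(X, X̃)`. -/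
theorem sequential_group_knockoff_exchangeable
    {M : ℕ} (α : Fin M → Type*) [∀ m, Fintype (α m)] [∀ m, DecidableEq (α m)]
    (Q : (∀ m, α m) → (∀ m, α m) → ℝ)
    (hQ0 : ∀ x y, 0 ≤ Q x y)
    (hQ1 : ∑ x : ∀ m, α m, ∑ y : ∀ m, α m, Q x y = 1)
    (hseq : ∀ (m : Fin M) (x xt : ∀ i, α i) (a b : α m),
      (∑ u : ∀ i, α i, ∑ y : ∀ i, α i,
          if (∀ i, i ≠ m → u i = x i) ∧ u m = a ∧
              (∀ i, i < m → y i = xt i) ∧ y m = b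
            then Q u y else 0) *
        (∑ u : ∀ i, α i, ∑ y : ∀ i, α i,
          if (∀ i, i ≠ m → u i = x i) ∧ (∀ i, i < m → y i = xt i)
            then Q u y else 0)
      =
      (∑ u : ∀ i, α i, ∑ y : ∀ i, α i,
          if (∀ i, i ≠ m → u i = x i) ∧ u m = a ∧ (∀ i, i < m → y i = xt i)
            then Q u y else 0) *
        (∑ u : ∀ i, α i, ∑ y : ∀ i, α i,
          if (∀ i, i ≠ m → u i = x i) ∧ u m = b ∧ (∀ i, i < m → y i = xt i)
            then Q u y else 0)) :
    ∀ S : Finset (Fin M), ∀ x xt : ∀ i, α i,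
      Q (fun m => if m ∈ S then xt m else x m) (fun m => if m ∈ S then x m else xt m)
        = Q x xt := by
  -- rewrite `hseq` in terms of `knockJ`
  have hseqJ : ∀ (m : Fin M) (x xt : ∀ i, α i) (a b : α m),
      knockJ Q ((m : ℕ) + 1) (Function.update x m a) (Function.update xt m b) *
        (∑ c : α m, knockJ Q (m : ℕ) (Function.update x m c) xt)
      = knockJ Q (m : ℕ) (Function.update x m a) xt *
          knockJ Q (m : ℕ) (Function.update x m b) xt := by
    intro m x xt a b
    have h := hseq m x xt a b
    rw [sum1_eq, sum2_eq, sum3_eq, sum3_eq] at h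
    exact h
  -- single-swap invariance of the partial marginals
  have single : ∀ k : ℕ, k ≤ M → ∀ m : Fin M, (m : ℕ) < k → ∀ x xt : ∀ i, α i,
      knockJ Q k (Function.update x m (xt m)) (Function.update xt m (x m))
        = knockJ Q k x xt := by
    intro k
    induction k with
    | zero => intro _ m hm; omega
    | succ k ih =>
      intro hk m hm x xt
      rcases Nat.lt_succ_iff_lt_or_eq.mp hm with hlt | heq
      · -- step case: use index m' with value k
        have hkM : k < M := by omega
        have hmm' : m ≠ (⟨k, hkM⟩ : Fin M) := by
          intro h
          have : (m : ℕ) = k := by rw [h]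
          omega
        have hval : ((⟨k, hkM⟩ : Fin M) : ℕ) = k := rfl
        have hG : ∀ a : α (⟨k, hkM⟩ : Fin M),
            knockJ Q k
              (Function.update (Function.update x m (xt m)) (⟨k, hkM⟩ : Fin M) a)
              (Function.update xt m (x m))
            = knockJ Q k (Function.update x (⟨k, hkM⟩ : Fin M) a) xt := by
          intro a
          have hxm : (Function.update x (⟨k, hkM⟩ : Fin M) a) m = x m :=
            Function.update_of_ne hmm' a x
          have h0 := ih (by omega) m hlt (Function.update x (⟨k, hkM⟩ : Fin M) a) xt
          rw [hxm] at h0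
          rw [Function.update_comm hmm' (xt m) a x]
          exact h0
        have hxm' : Function.update x m (xt m) (⟨k, hkM⟩ : Fin M) = x ⟨k, hkM⟩ :=
          Function.update_of_ne (Ne.symm hmm') (xt m) x
        have hxtm' : Function.update xt m (x m) (⟨k, hkM⟩ : Fin M) = xt ⟨k, hkM⟩ :=
          Function.update_of_ne (Ne.symm hmm') (x m) xt
        have ex : Function.update (Function.update x m (xt m)) (⟨k, hkM⟩ : Fin M)
            (x ⟨k, hkM⟩) = Function.update x m (xt m) := by
          rw [← hxm']; exact Function.update_eq_self _ _
        have ext : Function.update (Function.update xt m (x m)) (⟨k, hkM⟩ : Fin M)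
            (xt ⟨k, hkM⟩) = Function.update xt m (x m) := by
          rw [← hxtm']; exact Function.update_eq_self _ _
        have h1 := hseqJ (⟨k, hkM⟩ : Fin M)
          (Function.update x m (xt m)) (Function.update xt m (x m))
          (x ⟨k, hkM⟩) (xt ⟨k, hkM⟩)
        rw [hval] at h1
        rw [Finset.sum_congr rfl fun c _ => hG c] at h1
        rw [hG (x ⟨k, hkM⟩), hG (xt ⟨k, hkM⟩)] at h1
        rw [Function.update_eq_self] at h1
        rw [ex, ext] at h1
        have h2 := hseqJ (⟨k, hkM⟩ : Fin M) x xt (x ⟨k, hkM⟩) (xt ⟨k, hkM⟩)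
        rw [hval, Function.update_eq_self, Function.update_eq_self] at h2
        by_cases hCz :
            (∑ c : α (⟨k, hkM⟩ : Fin M),
              knockJ Q k (Function.update x (⟨k, hkM⟩ : Fin M) c) xt) = 0
        · have hle : ∀ z zt : ∀ i, α i,
              knockJ Q (k + 1) z zt
                ≤ ∑ c : α (⟨k, hkM⟩ : Fin M),
                    knockJ Q k (Function.update z (⟨k, hkM⟩ : Fin M) c) zt := by
            intro z zt
            calc knockJ Q (k + 1) z zt ≤ knockJ Q k z zt := knockJ_mono Q hQ0 k z zt
              _ = knockJ Q k (Function.update z (⟨k, hkM⟩ : Fin M) (z ⟨k, hkM⟩)) zt := by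
                  rw [Function.update_eq_self]
              _ ≤ ∑ c : α (⟨k, hkM⟩ : Fin M),
                    knockJ Q k (Function.update z (⟨k, hkM⟩ : Fin M) c) zt :=
                  Finset.single_le_sum
                    (fun c _ => knockJ_nonneg Q hQ0 k _ zt)
                    (Finset.mem_univ (z ⟨k, hkM⟩))
          have e1 : knockJ Q (k + 1) (Function.update x m (xt m))
              (Function.update xt m (x m)) = 0 := by
            have hb := hle (Function.update x m (xt m)) (Function.update xt m (x m))
            rw [Finset.sum_congr rfl fun c _ => hG c, hCz] at hb
            exact le_antisymm hb (knockJ_nonneg Q hQ0 _ _ _)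
          have e2 : knockJ Q (k + 1) x xt = 0 := by
            have hb := hle x xt
            rw [hCz] at hb
            exact le_antisymm hb (knockJ_nonneg Q hQ0 _ _ _)
          rw [e1, e2]
        · exact mul_right_cancel₀ hCz (h1.trans h2.symm)
      · -- base case: (m : ℕ) = k, direct use of hseqJ at m
        have h1 := hseqJ m x xt (xt m) (x m)
        rw [Function.update_eq_self] at h1
        have h2 := hseqJ m x xt (x m) (xt m)
        rw [Function.update_eq_self, Function.update_eq_self] at h2
        rw [heq] at h1 h2
        by_cases hCz : (∑ c : α m, knockJ Q k (Function.update x m c) xt) = 0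
        · have hGz : ∀ c : α m, knockJ Q k (Function.update x m c) xt = 0 := by
            intro c
            have hnn : ∀ c : α m, c ∈ (Finset.univ : Finset (α m)) →
                0 ≤ knockJ Q k (Function.update x m c) xt :=
              fun c _ => knockJ_nonneg Q hQ0 _ _ _
            exact (Finset.sum_eq_zero_iff_of_nonneg hnn).mp hCz c (Finset.mem_univ c)
          have e1 : knockJ Q (k + 1) (Function.update x m (xt m))
              (Function.update xt m (x m)) = 0 := by
            have hle := knockJ_mono Q hQ0 k (Function.update x m (xt m))
              (Function.update xt m (x m))
            have hcg : knockJ Q k (Function.update x m (xt m))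
                (Function.update xt m (x m))
                = knockJ Q k (Function.update x m (xt m)) xt := by
              refine knockJ_congr Q k _ _ _ fun i hi => ?_
              have hne : i ≠ m := by
                intro h
                rw [h, heq] at hi
                omega
              exact Function.update_of_ne hne (x m) xt
            rw [hcg, hGz (xt m)] at hle
            exact le_antisymm hle (knockJ_nonneg Q hQ0 _ _ _)
          have e2 : knockJ Q (k + 1) x xt = 0 := by
            have hle := knockJ_mono Q hQ0 k x xt
            have hx0 : knockJ Q k x xt
                = knockJ Q k (Function.update x m (x m)) xt := by
              rw [Function.update_eq_self]
            rw [hx0, hGz (x m)] at hle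
            exact le_antisymm hle (knockJ_nonneg Q hQ0 _ _ _)
          rw [e1, e2]
        · have h1' := h1
          rw [mul_comm (knockJ Q k (Function.update x m (xt m)) xt)] at h1'
          exact mul_right_cancel₀ hCz (h1'.trans h2.symm)
  -- full single-swap invariance of Q
  have singleQ : ∀ m : Fin M, ∀ x xt : ∀ i, α i,
      Q (Function.update x m (xt m)) (Function.update xt m (x m)) = Q x xt := by
    intro m x xt
    rw [← knockJ_top Q, ← knockJ_top Q x xt]
    exact single M le_rfl m m.isLt x xt
  -- multi-swap by induction on S
  intro S
  induction S using Finset.induction_on with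
  | empty => intro x xt; simp
  | insert m S hm ih =>
    intro x xt
    have hx : (fun i => if i ∈ insert m S then xt i else x i)
        = Function.update (fun i => if i ∈ S then xt i else x i) m
            ((fun i => if i ∈ S then x i else xt i) m) := by
      funext i
      rcases eq_or_ne i m with rfl | h
      · simp [hm]
      · simp [Function.update_apply, h, Finset.mem_insert, h]
    have hxt : (fun i => if i ∈ insert m S then x i else xt i)
        = Function.update (fun i => if i ∈ S then x i else xt i) m
            ((fun i => if i ∈ S then xt i else x i) m) := by
      funext i
      rcases eq_or_ne i m with rfl | h
      · simp [hm]
      · simp [Function.update_apply, h, Finset.mem_insert, h]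
    rw [hx, hxt]
    have := singleQ m (fun i => if i ∈ S then xt i else x i)
      (fun i => if i ∈ S then x i else xt i)
    rw [this, ih x xt]
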